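/- For real numbers m and s with 0 < m + 1 and 0 < s - m - 1, the integral ∫₀^∞ (log t)² · t^m / (1+t)^s dt equals B(s - m - 1, m + 1) · [ (Ψ(m+1) - Ψ(s-m-1))² + Ψ'(m+1) + Ψ'(s-m-1) ]. -/

import Mathlib

open MeasureTheory Set

/-- The Beta function `B(a,b) = ∫₀¹ x^(a-1) (1-x)^(b-1) dx`. -/
noncomputable def Beta (a b : ℝ) : ℝ := ∫ x in Ioo (0:ℝ) 1, x ^ (a-1) * (1-x) ^ (b-1)

/-- The digamma function, the logarithmic derivative of the Gamma function. -/
noncomputable def digamma (x : ℝ) : ℝ := deriv (fun y => Real.log (Real.Gamma y)) x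

/-- The trigamma function, the derivative of the digamma function. -/
noncomputable def trigamma (x : ℝ) : ℝ := deriv digamma x

section Aux

open Filter Asymptotics Topology

lemma integral_coe_ofReal {X : Type*} [MeasurableSpace X] {μ : Measure X} (f : X → ℝ) :
    ∫ x, ((f x : ℝ) : ℂ) ∂μ = ((∫ x, f x ∂μ : ℝ) : ℂ) :=
  integral_ofReal

/-- The real Gamma function is real-analytic at positive points. -/
lemma analyticAt_realGamma {x : ℝ} (hx : 0 < x) : AnalyticAt ℝ Real.Gamma x := by
  have h1 : AnalyticAt ℂ Complex.Gamma (x : ℂ) := by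
    have hdiff : DifferentiableOn ℂ Complex.Gamma {z : ℂ | 0 < z.re} := by
      intro z hz
      refine (Complex.differentiableAt_Gamma z fun m => ?_).differentiableWithinAt
      intro hzm
      rw [hzm] at hz
      simp only [mem_setOf_eq, Complex.neg_re, Complex.natCast_re] at hz
      have : (0:ℝ) ≤ (m:ℝ) := Nat.cast_nonneg m
      linarith
    refine hdiff.analyticAt ?_
    exact (isOpen_lt continuous_const Complex.continuous_re).mem_nhds (by simpa using hx)
  have h2 : AnalyticAt ℝ (fun y : ℝ => (Complex.Gamma (y : ℂ)).re) x :=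
    (Complex.reCLM.analyticAt _).comp
      ((h1.restrictScalars).comp (Complex.ofRealCLM.analyticAt x))
  refine h2.congr (Eventually.of_forall fun y => ?_)
  simp only [Complex.Gamma_ofReal, Complex.ofReal_re]

/-- The real logarithm is real-analytic at positive points. -/
lemma analyticAt_rlog {p : ℝ} (hp : 0 < p) : AnalyticAt ℝ Real.log p := by
  have h1 : AnalyticAt ℂ Complex.log (p : ℂ) :=
    analyticAt_clog (Or.inl (by simpa using hp))
  have h2 : AnalyticAt ℝ (fun y : ℝ => (Complex.log (y : ℂ)).re) p :=
    (Complex.reCLM.analyticAt _).comp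
      ((h1.restrictScalars).comp (Complex.ofRealCLM.analyticAt p))
  refine h2.congr ?_
  filter_upwards [eventually_gt_nhds hp] with y hy
  rw [← Complex.ofReal_log hy.le, Complex.ofReal_re]

lemma analyticOnNhd_logGamma : AnalyticOnNhd ℝ (fun y => Real.log (Real.Gamma y)) (Ioi 0) :=
  fun y hy => (analyticAt_rlog (Real.Gamma_pos_of_pos hy)).comp (analyticAt_realGamma hy)

lemma hasDerivAt_logGamma {x : ℝ} (hx : 0 < x) :
    HasDerivAt (fun y => Real.log (Real.Gamma y)) (digamma x) x :=
  (analyticOnNhd_logGamma x hx).differentiableAt.hasDerivAt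

lemma hasDerivAt_digamma {x : ℝ} (hx : 0 < x) : HasDerivAt digamma (trigamma x) x := by
  have h : AnalyticAt ℝ (deriv (fun y => Real.log (Real.Gamma y))) x :=
    analyticOnNhd_logGamma.deriv x hx
  exact h.differentiableAt.hasDerivAt

lemma hasDerivAt_realGamma {x : ℝ} (hx : 0 < x) :
    HasDerivAt Real.Gamma (Real.Gamma x * digamma x) x := by
  have hpos : 0 < Real.Gamma x := Real.Gamma_pos_of_pos hx
  have h2 : HasDerivAt (fun y => Real.exp (Real.log (Real.Gamma y)))
      (Real.exp (Real.log (Real.Gamma x)) * digamma x) x :=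
    (Real.hasDerivAt_exp _).comp x (hasDerivAt_logGamma hx)
  rw [Real.exp_log hpos] at h2
  refine h2.congr_of_eventuallyEq ?_
  filter_upwards [(analyticAt_realGamma hx).continuousAt.eventually
    (eventually_gt_nhds hpos)] with y hy
  rw [Real.exp_log hy]

/-- The Beta function in terms of the Gamma function. -/
lemma Beta_eq_Gamma {a b : ℝ} (ha : 0 < a) (hb : 0 < b) :
    Beta a b = Real.Gamma a * Real.Gamma b / Real.Gamma (a + b) := by
  have h := Complex.Gamma_mul_Gamma_eq_betaIntegral (s := (a:ℂ)) (t := (b:ℂ))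
    (by simpa using ha) (by simpa using hb)
  have hbeta : Complex.betaIntegral (a:ℂ) (b:ℂ) = ((Beta a b : ℝ) : ℂ) := by
    rw [Complex.betaIntegral, intervalIntegral.integral_of_le zero_le_one,
      MeasureTheory.integral_Ioc_eq_integral_Ioo]
    rw [Beta, ← integral_coe_ofReal]
    refine setIntegral_congr_fun measurableSet_Ioo fun x hx => ?_
    obtain ⟨hx0, hx1⟩ := hx
    rw [Complex.ofReal_mul, Complex.ofReal_cpow hx0.le, Complex.ofReal_cpow (by linarith)]
    push_cast
    ring
  rw [hbeta] at h
  have hab : 0 < Real.Gamma (a + b) := Real.Gamma_pos_of_pos (by linarith)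
  have : ((Real.Gamma a * Real.Gamma b : ℝ) : ℂ)
      = ((Real.Gamma (a + b) * Beta a b : ℝ) : ℂ) := by
    push_cast
    rw [← Complex.Gamma_ofReal, ← Complex.Gamma_ofReal, ← Complex.Gamma_ofReal] at *
    push_cast at h ⊢
    rw [h]
  have h2 : Real.Gamma a * Real.Gamma b = Real.Gamma (a + b) * Beta a b := by
    exact_mod_cast this
  field_simp [h2]
  rw [h2]; ring

/-- Change of variables `t = u/(1-u)` turning the Mellin-type integral into the Beta integral. -/
lemma integral_Ioi_one_add_rpow {x s : ℝ} (hx : 0 < x) (hxs : x < s) :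
    ∫ t in Ioi (0:ℝ), t ^ (x - 1) * (1 + t) ^ (-s) = Beta x (s - x) := by
  have himg : (fun u : ℝ => u / (1 - u)) '' Ioo 0 1 = Ioi 0 := by
    ext t
    constructor
    · rintro ⟨u, ⟨h0, h1⟩, rfl⟩
      exact div_pos h0 (by linarith)
    · intro ht
      have ht0 : (0:ℝ) < t := ht
      refine ⟨t / (1 + t), ⟨div_pos ht0 (by linarith), ?_⟩, ?_⟩
      · rw [div_lt_one (by linarith)]; linarith
      · field_simp
        ring
  have hderiv : ∀ u ∈ Ioo (0:ℝ) 1,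
      HasDerivWithinAt (fun u : ℝ => u / (1 - u)) (((1 - u) ^ 2)⁻¹) (Ioo 0 1) u := by
    intro u hu
    have hne : (1:ℝ) - u ≠ 0 := by have := hu.2; intro h; simp only [sub_eq_zero] at h; linarith
    have h1 : HasDerivAt (fun u : ℝ => u / (1 - u))
        ((1 * (1 - u) - u * (0 - 1)) / (1 - u) ^ 2) u :=
      (hasDerivAt_id u).div ((hasDerivAt_const u (1:ℝ)).sub (hasDerivAt_id u)) hne
    have : (1 * (1 - u) - u * (0 - 1)) / (1 - u) ^ 2 = ((1 - u) ^ 2)⁻¹ := by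
      field_simp
      ring
    rw [this] at h1
    exact h1.hasDerivWithinAt
  have hinj : InjOn (fun u : ℝ => u / (1 - u)) (Ioo 0 1) := by
    intro u hu v hv h
    have hneu : (1:ℝ) - u ≠ 0 := by have := hu.2; intro hc; simp only [sub_eq_zero] at hc; linarith
    have hnev : (1:ℝ) - v ≠ 0 := by have := hv.2; intro hc; simp only [sub_eq_zero] at hc; linarith
    simp only at h
    rw [div_eq_div_iff hneu hnev] at h
    linear_combination h
  have key := integral_image_eq_integral_abs_deriv_smul measurableSet_Ioo hderiv hinj
    (fun t => t ^ (x - 1) * (1 + t) ^ (-s))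
  rw [himg] at key
  rw [key, Beta]
  refine setIntegral_congr_fun measurableSet_Ioo fun u hu => ?_
  obtain ⟨hu0, hu1⟩ := hu
  have hv : (0:ℝ) < 1 - u := by linarith
  have hvne : (1:ℝ) - u ≠ 0 := ne_of_gt hv
  have e1 : 1 + u / (1 - u) = (1 - u)⁻¹ := by field_simp; ring
  rw [smul_eq_mul, e1]
  rw [abs_of_pos (by positivity)]
  have e2 : (u / (1 - u)) ^ (x - 1) = u ^ (x - 1) * (1 - u) ^ (-(x - 1)) := by
    rw [Real.div_rpow hu0.le hv.le, Real.rpow_neg hv.le, div_eq_mul_inv]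
  have e3 : ((1 - u)⁻¹) ^ (-s) = (1 - u) ^ s := by
    rw [Real.inv_rpow hv.le, ← Real.rpow_neg hv.le, neg_neg]
  have e4 : ((1 - u) ^ 2)⁻¹ = (1 - u) ^ (-2 : ℝ) := by
    rw [← Real.rpow_natCast (1 - u) 2, ← Real.rpow_neg hv.le]
    norm_num
  rw [e2, e3, e4]
  calc (1 - u) ^ (-2 : ℝ) * (u ^ (x - 1) * (1 - u) ^ (-(x - 1)) * (1 - u) ^ s)
      = u ^ (x - 1) * ((1 - u) ^ (-2 : ℝ) * (1 - u) ^ (-(x - 1)) * (1 - u) ^ s) := by ring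
    _ = u ^ (x - 1) * (1 - u) ^ ((-2 : ℝ) + -(x - 1) + s) := by
        rw [← Real.rpow_add hv, ← Real.rpow_add hv]
    _ = u ^ (x - 1) * (1 - u) ^ (s - x - 1) := by
        congr 1
        ring

lemma hasDerivAt_FG {s x : ℝ} (hx : 0 < x) (hxs : x < s) :
    HasDerivAt (fun y => Real.Gamma y * Real.Gamma (s - y) / Real.Gamma s)
      (Real.Gamma x * Real.Gamma (s - x) / Real.Gamma s * (digamma x - digamma (s - x))) x := by
  have hsx : 0 < s - x := by linarith
  have hinner : HasDerivAt (fun y : ℝ => s - y) (-1) x := by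
    simpa using (hasDerivAt_id x).const_sub s
  have h2 : HasDerivAt (fun y : ℝ => Real.Gamma (s - y))
      (Real.Gamma (s - x) * digamma (s - x) * (-1)) x :=
    (hasDerivAt_realGamma hsx).comp x hinner
  have h3 := ((hasDerivAt_realGamma hx).mul h2).div_const (Real.Gamma s)
  refine h3.congr_deriv ?_
  ring

lemma hasDerivAt_psidiff {s x : ℝ} (hx : 0 < x) (hxs : x < s) :
    HasDerivAt (fun y : ℝ => digamma y - digamma (s - y))
      (trigamma x + trigamma (s - x)) x := by
  have hsx : 0 < s - x := by linarith
  have hinner : HasDerivAt (fun y : ℝ => s - y) (-1) x := by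
    simpa using (hasDerivAt_id x).const_sub s
  have i2 : HasDerivAt (fun y : ℝ => digamma (s - y)) (trigamma (s - x) * (-1)) x :=
    (hasDerivAt_digamma hsx).comp x hinner
  have := (hasDerivAt_digamma hx).sub i2
  refine this.congr_deriv ?_
  ring

lemma hasDerivAt_W {s x : ℝ} (hx : 0 < x) (hxs : x < s) :
    HasDerivAt (fun y =>
        Real.Gamma y * Real.Gamma (s - y) / Real.Gamma s * (digamma y - digamma (s - y)))
      (Real.Gamma x * Real.Gamma (s - x) / Real.Gamma s *
        ((digamma x - digamma (s - x)) ^ 2 + trigamma x + trigamma (s - x))) x := by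
  have := (hasDerivAt_FG hx hxs).mul (hasDerivAt_psidiff hx hxs)
  refine this.congr_deriv ?_
  ring

end Aux

theorem logsq_beta_integral (m s : ℝ) (hm : 0 < m + 1) (hs : 0 < s - m - 1) :
    (∫ t in Ioi (0:ℝ), (Real.log t) ^ 2 * t ^ m / (1 + t) ^ s)
      = Beta (s - m - 1) (m + 1) *
        ((digamma (m + 1) - digamma (s - m - 1)) ^ 2
          + trigamma (m + 1) + trigamma (s - m - 1)) := by
  have hs0 : 0 < s := by linarith
  have has : m + 1 < s := by linarith
  have hsa : 0 < s - (m + 1) := by linarith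
  set f : ℝ → ℂ := fun t => ((1 + t : ℝ) : ℂ) ^ (-(s : ℂ)) with hf_def
  have hnorm : ∀ t : ℝ, 0 < t → ‖f t‖ = (1 + t) ^ (-s) := by
    intro t ht
    rw [hf_def]
    simp only
    rw [Complex.norm_cpow_eq_rpow_re_of_pos (by linarith)]
    simp
  have hfc : ContinuousOn f (Ioi 0) := by
    refine ContinuousOn.cpow_const
      ((Complex.continuous_ofReal.comp (continuous_const.add continuous_id)).continuousOn) ?_
    intro t ht
    have ht0 : (0:ℝ) < t := ht
    exact Or.inl (by simpa using by linarith)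
  set g : ℝ → ℂ := fun t => Real.log t • f t with hg_def
  have hgc : ContinuousOn g (Ioi 0) :=
    (Real.continuousOn_log.mono fun x hx => ne_of_gt hx).smul hfc
  have hfloc : LocallyIntegrableOn f (Ioi 0) := hfc.locallyIntegrableOn measurableSet_Ioi
  have hgloc : LocallyIntegrableOn g (Ioi 0) := hgc.locallyIntegrableOn measurableSet_Ioi
  have hf_top : f =O[Filter.atTop] fun t : ℝ => t ^ (-s) := by
    rw [Asymptotics.isBigO_iff]
    refine ⟨1, ?_⟩
    filter_upwards [Filter.eventually_ge_atTop (1:ℝ)] with t ht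
    have ht0 : (0:ℝ) < t := by linarith
    rw [hnorm t ht0, one_mul, Real.norm_rpow_of_nonneg ht0.le, Real.norm_of_nonneg ht0.le]
    exact Real.rpow_le_rpow_of_nonpos ht0 (by linarith) (by linarith)
  have hf_bot : f =O[nhdsWithin 0 (Ioi 0)] fun t : ℝ => t ^ (-(0:ℝ)) := by
    rw [Asymptotics.isBigO_iff]
    refine ⟨1, ?_⟩
    filter_upwards [self_mem_nhdsWithin] with t ht
    have ht0 : (0:ℝ) < t := ht
    rw [hnorm t ht0, neg_zero, Real.rpow_zero, norm_one, one_mul]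
    exact Real.rpow_le_one_of_one_le_of_nonpos (by linarith) (by linarith)
  have hd1 : ∀ x ∈ Ioo (0:ℝ) s, HasDerivAt (mellin f) (mellin g (x:ℂ)) (x:ℂ) := by
    intro x hx
    exact (mellin_hasDerivAt_of_isBigO_rpow hfloc hf_top (by simpa using hx.2)
      hf_bot (by simpa using hx.1)).2
  have hg_top : g =O[Filter.atTop] fun t : ℝ => t ^ (-((m + 1 + s)/2)) :=
    isBigO_rpow_top_log_smul (by linarith) hf_top
  have hg_bot : g =O[nhdsWithin 0 (Ioi 0)] fun t : ℝ => t ^ (-((m + 1)/2)) :=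
    isBigO_rpow_zero_log_smul (by linarith) hf_bot
  have hd2 : HasDerivAt (mellin g) (mellin (fun t => Real.log t • g t) ((m+1 : ℝ):ℂ))
      ((m+1 : ℝ):ℂ) :=
    (mellin_hasDerivAt_of_isBigO_rpow hgloc hg_top (by simp; linarith)
      hg_bot (by simp; linarith)).2
  -- real parts
  have hG1 : ∀ x ∈ Ioo (0:ℝ) s,
      HasDerivAt (fun y : ℝ => (mellin f (y:ℂ)).re) (mellin g (x:ℂ)).re x :=
    fun x hx => (hd1 x hx).real_of_complex
  have hG2 : HasDerivAt (fun y : ℝ => (mellin g (y:ℂ)).re)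
      (mellin (fun t => Real.log t • g t) ((m+1 : ℝ):ℂ)).re (m+1) :=
    hd2.real_of_complex
  -- identification of the first function with the Gamma quotient
  have hmf : ∀ x ∈ Ioo (0:ℝ) s,
      (mellin f (x:ℂ)).re = Real.Gamma x * Real.Gamma (s - x) / Real.Gamma s := by
    intro x hx
    have h1 : mellin f (x:ℂ)
        = ((∫ t in Ioi (0:ℝ), t ^ (x - 1) * (1 + t) ^ (-s) : ℝ) : ℂ) := by
      rw [mellin, ← integral_coe_ofReal]
      refine setIntegral_congr_fun measurableSet_Ioi fun t ht => ?_
      have ht0 : (0:ℝ) < t := ht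
      rw [smul_eq_mul, hf_def]
      simp only
      rw [Complex.ofReal_mul, Complex.ofReal_cpow ht0.le,
        Complex.ofReal_cpow (by linarith : (0:ℝ) ≤ 1 + t)]
      push_cast
      ring
    rw [h1, Complex.ofReal_re, integral_Ioi_one_add_rpow hx.1 hx.2,
      Beta_eq_Gamma hx.1 (by linarith [hx.2] : (0:ℝ) < s - x),
      show x + (s - x) = s from by ring]
  -- the left-hand side as a Mellin transform
  have hLHS : (∫ t in Ioi (0:ℝ), (Real.log t) ^ 2 * t ^ m / (1 + t) ^ s)
      = (mellin (fun t => Real.log t • g t) ((m+1 : ℝ):ℂ)).re := by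
    have h1 : mellin (fun t => Real.log t • g t) ((m+1 : ℝ):ℂ)
        = ((∫ t in Ioi (0:ℝ), (Real.log t) ^ 2 * t ^ m / (1 + t) ^ s : ℝ) : ℂ) := by
      rw [mellin, ← integral_coe_ofReal]
      refine setIntegral_congr_fun measurableSet_Ioi fun t ht => ?_
      have ht0 : (0:ℝ) < t := ht
      have h1t : (0:ℝ) < 1 + t := by linarith
      rw [hg_def, hf_def]
      simp only [smul_eq_mul, Complex.real_smul]
      rw [show (((m+1 : ℝ):ℂ) - 1) = ((m : ℝ) : ℂ) from by push_cast; ring,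
        show (-(s:ℂ)) = ((-s : ℝ) : ℂ) from by push_cast; ring,
        ← Complex.ofReal_cpow ht0.le, ← Complex.ofReal_cpow h1t.le,
        ← Complex.ofReal_mul, ← Complex.ofReal_mul, ← Complex.ofReal_mul]
      norm_cast
      rw [Real.rpow_neg h1t.le, div_eq_mul_inv]
      ring
    rw [h1, Complex.ofReal_re]
  rw [hLHS, ← hG2.deriv]
  have hmem : Ioo (0:ℝ) s ∈ nhds (m + 1) := isOpen_Ioo.mem_nhds ⟨hm, has⟩
  have hEq : (fun y : ℝ => (mellin g (y:ℂ)).re) =ᶠ[nhds (m+1)]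
      (fun y : ℝ => Real.Gamma y * Real.Gamma (s - y) / Real.Gamma s
        * (digamma y - digamma (s - y))) := by
    filter_upwards [hmem] with y hy
    have hyEq : (fun z : ℝ => (mellin f (z:ℂ)).re) =ᶠ[nhds y]
        (fun z => Real.Gamma z * Real.Gamma (s - z) / Real.Gamma s) := by
      filter_upwards [isOpen_Ioo.mem_nhds hy] with z hz using hmf z hz
    rw [← (hG1 y hy).deriv, hyEq.deriv_eq, (hasDerivAt_FG hy.1 hy.2).deriv]
  rw [hEq.deriv_eq, (hasDerivAt_W hm has).deriv]
  rw [Beta_eq_Gamma hs hm, show (s - m - 1) + (m + 1) = s from by ring,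
    show s - (m + 1) = s - m - 1 from by ring]
  ring
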